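/- Let A₁ and A₂ be positive semidefinite operators on a finite-dimensional complex Hilbert space whose minimum nonzero eigenvalues are both at least v > 0, and whose kernels N₁ = ker(A₁) and N₂ = ker(A₂) satisfy N₁ ∩ N₂ = {0}. Then A₁ + A₂ ≽ 2v·sin²(α/2)·I, where cos α = max{ |⟨x|y⟩| : x ∈ N₁, y ∈ N₂, ‖x‖ = ‖y‖ = 1 }. -/

import Mathlib

open scoped InnerProductSpace

private lemma gl_part (n : ℕ) (A : EuclideanSpace ℂ (Fin n) →ₗ[ℂ] EuclideanSpace ℂ (Fin n))
    (v : ℝ)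
    (hsym : ∀ x y, (inner ℂ (A x) y : ℂ) = inner ℂ x (A y))
    (hmin : ∀ x ∈ (LinearMap.ker A)ᗮ, v * ‖x‖ ^ 2 ≤ (inner ℂ x (A x) : ℂ).re)
    (x : EuclideanSpace ℂ (Fin n)) :
    v * ‖x - (Submodule.orthogonalProjectionOnto (LinearMap.ker A) x : EuclideanSpace ℂ (Fin n))‖ ^ 2
      ≤ (inner ℂ x (A x) : ℂ).re := by
  set K := LinearMap.ker A
  set p : EuclideanSpace ℂ (Fin n) := (Submodule.orthogonalProjectionOnto K x : EuclideanSpace ℂ (Fin n)) with hp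
  have hpmem : p ∈ K := (Submodule.orthogonalProjectionOnto K x).2
  have hAp : A p = 0 := LinearMap.mem_ker.mp hpmem
  have hperp : x - p ∈ Kᗮ := Submodule.sub_starProjection_mem_orthogonal x
  have key : (inner ℂ x (A x) : ℂ) = inner ℂ (x - p) (A (x - p)) := by
    have h1 : A x = A (x - p) := by rw [map_sub, hAp, sub_zero]
    have h2 : (inner ℂ p (A (x - p)) : ℂ) = 0 := by
      rw [← hsym p (x - p), hAp, inner_zero_left]
    calc (inner ℂ x (A x) : ℂ) = inner ℂ ((x - p) + p) (A (x - p)) := by rw [← h1, sub_add_cancel]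
      _ = inner ℂ (x - p) (A (x - p)) + inner ℂ p (A (x - p)) := inner_add_left _ _ _
      _ = inner ℂ (x - p) (A (x - p)) := by rw [h2, add_zero]
  rw [key]
  exact hmin (x - p) hperp

set_option maxHeartbeats 1000000 in
/-- Kitaev's Geometric Lemma. -/
theorem geometric_lemma (n : ℕ) (A₁ A₂ : EuclideanSpace ℂ (Fin n) →ₗ[ℂ] EuclideanSpace ℂ (Fin n))
    (v : ℝ) (hv : 0 < v)
    (hsym₁ : ∀ x y, (inner ℂ (A₁ x) y) = inner ℂ x (A₁ y))
    (hsym₂ : ∀ x y, (inner ℂ (A₂ x) y) = inner ℂ x (A₂ y))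
    (hpos₁ : ∀ x, 0 ≤ (inner ℂ x (A₁ x)).re)
    (hpos₂ : ∀ x, 0 ≤ (inner ℂ x (A₂ x)).re)
    (hmin₁ : ∀ x ∈ (LinearMap.ker A₁)ᗮ, v * ‖x‖ ^ 2 ≤ (inner ℂ x (A₁ x)).re)
    (hmin₂ : ∀ x ∈ (LinearMap.ker A₂)ᗮ, v * ‖x‖ ^ 2 ≤ (inner ℂ x (A₂ x)).re)
    (htriv : LinearMap.ker A₁ ⊓ LinearMap.ker A₂ = ⊥)
    (c : ℝ)
    (hc : IsLUB {r : ℝ | ∃ x ∈ LinearMap.ker A₁, ∃ y ∈ LinearMap.ker A₂,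
        ‖x‖ = 1 ∧ ‖y‖ = 1 ∧ r = ‖(inner ℂ x y)‖} c)
    (α : ℝ) (hα : α = Real.arccos c) :
    ∀ x, 2 * v * Real.sin (α / 2) ^ 2 * ‖x‖ ^ 2 ≤ (inner ℂ x ((A₁ + A₂) x)).re := by
  set S := {r : ℝ | ∃ x ∈ LinearMap.ker A₁, ∃ y ∈ LinearMap.ker A₂,
      ‖x‖ = 1 ∧ ‖y‖ = 1 ∧ r = ‖(inner ℂ x y)‖} with hS
  -- S is nonempty
  have hSne : S.Nonempty := by
    by_contra h
    rw [Set.not_nonempty_iff_eq_empty] at h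
    have h1 : (c - 1) ∈ upperBounds S := by
      intro r hr; rw [h] at hr; exact absurd hr (Set.notMem_empty r)
    have := hc.2 h1
    linarith
  -- 0 ≤ c ≤ 1
  have hc0 : 0 ≤ c := by
    obtain ⟨r, hr⟩ := hSne
    have h0 : 0 ≤ r := by
      obtain ⟨a, -, b, -, -, -, hre⟩ := hr
      exact hre ▸ (norm_nonneg _)
    linarith [hc.1 hr]
  have hc1 : c ≤ 1 := by
    apply hc.2
    intro r hr
    obtain ⟨a, -, b, -, ha, hb, hre⟩ := hr
    have := norm_inner_le_norm (𝕜 := ℂ) a b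
    rw [ha, hb] at this
    simpa [hre] using this
  -- angle bound between the kernels
  have hangle : ∀ a ∈ LinearMap.ker A₁, ∀ b ∈ LinearMap.ker A₂,
      ‖(inner ℂ a b : ℂ)‖ ≤ c * ‖a‖ * ‖b‖ := by
    intro a ha b hb
    rcases eq_or_ne a 0 with rfl | ha0
    · simp [mul_nonneg (mul_nonneg hc0 (norm_nonneg _)) (norm_nonneg _)]
    rcases eq_or_ne b 0 with rfl | hb0
    · simp [mul_nonneg (mul_nonneg hc0 (norm_nonneg _)) (norm_nonneg _)]
    have hna : (0:ℝ) < ‖a‖ := norm_pos_iff.mpr ha0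
    have hnb : (0:ℝ) < ‖b‖ := norm_pos_iff.mpr hb0
    have hmem : ‖(inner ℂ ((‖a‖:ℂ)⁻¹ • a) ((‖b‖:ℂ)⁻¹ • b) : ℂ)‖ ∈ S := by
      refine ⟨(‖a‖:ℂ)⁻¹ • a, Submodule.smul_mem _ _ ha, (‖b‖:ℂ)⁻¹ • b,
        Submodule.smul_mem _ _ hb, ?_, ?_, rfl⟩
      · rw [norm_smul]; simp [hna.ne']
      · rw [norm_smul]; simp [hnb.ne']
    have hle := hc.1 hmem
    rw [inner_smul_left, inner_smul_right] at hle
    rw [norm_mul, norm_mul] at hle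
    simp only [norm_inv, Complex.norm_conj, Complex.norm_real, Real.norm_eq_abs, abs_norm] at hle
    rw [inv_mul_le_iff₀ hna] at hle
    have hle2 := (inv_mul_le_iff₀ hnb).mp hle
    nlinarith [norm_nonneg (inner ℂ a b : ℂ)]
  -- main argument
  intro x
  have hsin : Real.sin (α / 2) ^ 2 = (1 - c) / 2 := by
    subst hα
    have h1 := Real.sin_sq (Real.arccos c / 2)
    have h2 := Real.cos_sq (Real.arccos c / 2)
    have h3 : 2 * (Real.arccos c / 2) = Real.arccos c := by ring
    rw [h3, Real.cos_arccos (by linarith) hc1] at h2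
    linarith
  set N₁ := LinearMap.ker A₁
  set N₂ := LinearMap.ker A₂
  set x₁ : EuclideanSpace ℂ (Fin n) := (Submodule.orthogonalProjectionOnto N₁ x : EuclideanSpace ℂ (Fin n)) with hx₁
  set x₂ : EuclideanSpace ℂ (Fin n) := (Submodule.orthogonalProjectionOnto N₂ x : EuclideanSpace ℂ (Fin n)) with hx₂
  have hx₁mem : x₁ ∈ N₁ := (Submodule.orthogonalProjectionOnto N₁ x).2
  have hx₂mem : x₂ ∈ N₂ := (Submodule.orthogonalProjectionOnto N₂ x).2
  have hi₁ : (inner ℂ (x - x₁) x₁ : ℂ) = 0 := Submodule.starProjection_inner_eq_zero x x₁ hx₁mem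
  have hi₂ : (inner ℂ (x - x₂) x₂ : ℂ) = 0 := Submodule.starProjection_inner_eq_zero x x₂ hx₂mem
  have hi₁' : (inner ℂ x₁ (x - x₁) : ℂ) = 0 := by rw [← inner_conj_symm, hi₁, map_zero]
  have hi₂' : (inner ℂ x₂ (x - x₂) : ℂ) = 0 := by rw [← inner_conj_symm, hi₂, map_zero]
  have hxeq₁ : x₁ + (x - x₁) = x := by abel
  have hxeq₂ : x₂ + (x - x₂) = x := by abel
  -- Pythagoras
  have hpy₁ : ‖x‖ ^ 2 = ‖x₁‖ ^ 2 + ‖x - x₁‖ ^ 2 := by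
    have h := norm_add_sq (𝕜 := ℂ) x₁ (x - x₁)
    rw [hxeq₁, hi₁'] at h
    simpa using h
  have hpy₂ : ‖x‖ ^ 2 = ‖x₂‖ ^ 2 + ‖x - x₂‖ ^ 2 := by
    have h := norm_add_sq (𝕜 := ℂ) x₂ (x - x₂)
    rw [hxeq₂, hi₂'] at h
    simpa using h
  -- re inner ℂ x xᵢ = ‖xᵢ‖²
  have hre₁ : (inner ℂ x x₁ : ℂ).re = ‖x₁‖ ^ 2 := by
    rw [← hxeq₁, inner_add_left, hi₁, add_zero, inner_self_eq_norm_sq_to_K]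
    norm_cast
  have hre₂ : (inner ℂ x x₂ : ℂ).re = ‖x₂‖ ^ 2 := by
    rw [← hxeq₂, inner_add_left, hi₂, add_zero, inner_self_eq_norm_sq_to_K]
    norm_cast
  -- ‖x₁‖² + ‖x₂‖² ≤ (1+c)‖x‖²
  have hsum : ‖x₁‖ ^ 2 + ‖x₂‖ ^ 2 ≤ (1 + c) * ‖x‖ ^ 2 := by
    have h1 : ‖x₁‖ ^ 2 + ‖x₂‖ ^ 2 = (inner ℂ x (x₁ + x₂) : ℂ).re := by
      rw [inner_add_right, Complex.add_re, hre₁, hre₂]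
    have h2 : (inner ℂ x (x₁ + x₂) : ℂ).re ≤ ‖x‖ * ‖x₁ + x₂‖ :=
      le_trans (Complex.re_le_norm _) (norm_inner_le_norm (𝕜 := ℂ) x (x₁ + x₂))
    have hcs : (inner ℂ x₁ x₂ : ℂ).re ≤ c * ‖x₁‖ * ‖x₂‖ :=
      le_trans (Complex.re_le_norm _) (hangle x₁ hx₁mem x₂ hx₂mem)
    have h3 : ‖x₁ + x₂‖ ^ 2 ≤ (1 + c) * (‖x₁‖ ^ 2 + ‖x₂‖ ^ 2) := by
      have h := norm_add_sq (𝕜 := ℂ) x₁ x₂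
      have hid : RCLike.re (inner ℂ x₁ x₂ : ℂ) = (inner ℂ x₁ x₂ : ℂ).re := rfl
      rw [hid] at h
      nlinarith [mul_nonneg hc0 (sq_nonneg (‖x₁‖ - ‖x₂‖))]
    have hS2 : ‖x₁‖ ^ 2 + ‖x₂‖ ^ 2 ≤ ‖x‖ * ‖x₁ + x₂‖ := h1 ▸ h2
    rcases le_or_gt (‖x₁‖ ^ 2 + ‖x₂‖ ^ 2) 0 with h | h
    · nlinarith [sq_nonneg ‖x‖]
    · have hsq : (‖x₁‖ ^ 2 + ‖x₂‖ ^ 2) * (‖x₁‖ ^ 2 + ‖x₂‖ ^ 2)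
          ≤ ((1 + c) * ‖x‖ ^ 2) * (‖x₁‖ ^ 2 + ‖x₂‖ ^ 2) := by
        nlinarith [norm_nonneg x, norm_nonneg (x₁ + x₂), sq_nonneg (‖x‖ * ‖x₁ + x₂‖)]
      exact le_of_mul_le_mul_right hsq h
  -- operator bounds
  have hb₁ := gl_part n A₁ v hsym₁ hmin₁ x
  have hb₂ := gl_part n A₂ v hsym₂ hmin₂ x
  rw [← hx₁] at hb₁
  rw [← hx₂] at hb₂
  have hadd : (inner ℂ x ((A₁ + A₂) x) : ℂ).re
      = (inner ℂ x (A₁ x) : ℂ).re + (inner ℂ x (A₂ x) : ℂ).re := by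
    rw [LinearMap.add_apply, inner_add_right, Complex.add_re]
  rw [hadd, hsin]
  have hvs := mul_le_mul_of_nonneg_left hsum hv.le
  nlinarith [hb₁, hb₂]
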